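/- Let H be a cocommutative Hopf algebra over k and α, β the maps of the previous statement. Then α and β intertwine the diagonal left H-module structure on R_n(H) = H^{⊗(n+1)} (a·(h_0⊗…⊗h_n) = a^{(0)}h_0⊗…⊗a^{(n)}h_n) with the left H-module structure on E_n(H) = H^{⊗(n+1)} given by multiplication on the first factor; i.e., α(a·_E x) = a·_R α(x) for all a ∈ H and x ∈ H^{⊗(n+1)}. -/

import Mathlib

open TensorProduct LinearMap

noncomputable section

variable (k H : Type) [CommRing k] [Ring H] [HopfAlgebra k H]

/-- `VM k H n` is the `n`-fold tensor power `H ⊗ ⋯ ⊗ H` (with `VM k H 0 = k`),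
as an object of the category of `k`-modules. -/
def VM : ℕ → ModuleCat k
  | 0 => ModuleCat.of k k
  | n + 1 => ModuleCat.of k (H ⊗[k] (VM n))

/-- the `n`-fold tensor power `H^{⊗n}` -/
abbrev Vpow (n : ℕ) : Type := ↥(VM k H n)

/-- cast along an equality of lengths -/
def castV {m n : ℕ} (h : m = n) : Vpow k H m →ₗ[k] Vpow k H n := h ▸ LinearMap.id

/-- iterated composition (`f ^ i`) -/
def powL {M : Type} [AddCommGroup M] [Module k M] (f : M →ₗ[k] M) : ℕ → (M →ₗ[k] M)
  | 0 => LinearMap.id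
  | i + 1 => f ∘ₗ powL f i

abbrev mu : H ⊗[k] H →ₗ[k] H := LinearMap.mul' k H
abbrev cm : H →ₗ[k] H ⊗[k] H := Coalgebra.comul
abbrev ct : H →ₗ[k] k := Coalgebra.counit
abbrev ap : H →ₗ[k] H := HopfAlgebra.antipode (R := k)
abbrev un : k →ₗ[k] H := Algebra.linearMap k H

/-- the diagonal action of `H` on `H^{⊗ n}` (via iterated comultiplication) -/
def diagAct : ∀ n, H ⊗[k] Vpow k H n →ₗ[k] Vpow k H n
  | 0 => ct k H ∘ₗ (TensorProduct.rid k H).toLinearMap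
  | n + 1 =>
    TensorProduct.map (mu k H) (diagAct n) ∘ₗ
      (tensorTensorTensorComm k H H H (Vpow k H n)).toLinearMap ∘ₗ
      rTensor (H ⊗[k] Vpow k H n) (cm k H)

/-- multiplication on the first tensor factor (with the counit action in degree `0`) -/
def actF : ∀ n, H ⊗[k] Vpow k H n →ₗ[k] Vpow k H n
  | 0 => ct k H ∘ₗ (TensorProduct.rid k H).toLinearMap
  | n + 1 =>
    TensorProduct.map (mu k H) LinearMap.id ∘ₗ
      (TensorProduct.assoc k H H (Vpow k H n)).symm.toLinearMap

/-- the map `α(h₀ ⊗ ⋯ ⊗ hₙ) = h₀⁽⁰⁾ ⊗ h₀⁽¹⁾h₁⁽⁰⁾ ⊗ ⋯` -/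
def alphaMap : ∀ n, Vpow k H n →ₗ[k] Vpow k H n
  | 0 => LinearMap.id
  | n + 1 =>
    lTensor H (diagAct k H n) ∘ₗ (TensorProduct.assoc k H H (Vpow k H n)).toLinearMap ∘ₗ
      TensorProduct.map (cm k H) (alphaMap n)

/-- the map `β(h₀ ⊗ ⋯ ⊗ hₙ) = h₀⁽⁰⁾ ⊗ (S h₀⁽¹⁾)h₁⁽⁰⁾ ⊗ ⋯` -/
def betaMap : ∀ n, Vpow k H n →ₗ[k] Vpow k H n
  | 0 => LinearMap.id
  | n + 1 =>
    lTensor H (betaMap n ∘ₗ actF k H n ∘ₗ rTensor (Vpow k H n) (ap k H)) ∘ₗ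
      (TensorProduct.assoc k H H (Vpow k H n)).toLinearMap ∘ₗ
      rTensor (Vpow k H n) (cm k H)

/-- swap of the first two tensor factors -/
def swapV (n : ℕ) : H ⊗[k] (H ⊗[k] Vpow k H n) →ₗ[k] H ⊗[k] (H ⊗[k] Vpow k H n) :=
  (TensorProduct.assoc k H H (Vpow k H n)).toLinearMap ∘ₗ
    rTensor (Vpow k H n) (TensorProduct.comm k H H).toLinearMap ∘ₗ
    (TensorProduct.assoc k H H (Vpow k H n)).symm.toLinearMap

/-- rotation moving the last tensor factor to the front (no sign) -/
def rho : ∀ n, Vpow k H n →ₗ[k] Vpow k H n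
  | 0 => LinearMap.id
  | 1 => LinearMap.id
  | n + 2 => swapV k H n ∘ₗ lTensor H (rho (n + 1))

/-- the cyclic operator `λ(c₀ ⊗ ⋯ ⊗ cₙ) = (-1)^n cₙ ⊗ c₀ ⊗ ⋯ ⊗ c_{n-1}` in degree `n` -/
def cycOp (n : ℕ) : Vpow k H (n + 1) →ₗ[k] Vpow k H (n + 1) :=
  ((-1 : k) ^ n) • rho k H (n + 1)

/-- the cyclic operator `t = β ∘ λ ∘ α` on `E_n(H) = H^{⊗ (n+1)}` -/
def tdeg (n : ℕ) : Vpow k H (n + 1) →ₗ[k] Vpow k H (n + 1) :=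
  betaMap k H (n + 1) ∘ₗ cycOp k H n ∘ₗ alphaMap k H (n + 1)

/-- the `i`-th face (counit on the `i`-th factor) of the coalgebra cyclic module -/
def face : ∀ (n : ℕ), ℕ → (Vpow k H (n + 1) →ₗ[k] Vpow k H n)
  | n, 0 => (TensorProduct.lid k (Vpow k H n)).toLinearMap ∘ₗ rTensor (Vpow k H n) (ct k H)
  | 0, _ + 1 => (TensorProduct.lid k (Vpow k H 0)).toLinearMap ∘ₗ rTensor (Vpow k H 0) (ct k H)
  | n + 1, i + 1 => lTensor H (face n i)

/-- insert `1` in front -/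
def insV (n : ℕ) : Vpow k H n →ₗ[k] Vpow k H (n + 1) :=
  rTensor (Vpow k H n) (un k H) ∘ₗ (TensorProduct.lid k (Vpow k H n)).symm.toLinearMap

/-- the degeneracy `s_j` inserting a `1` after the `j`-th factor -/
def degV : ∀ (n : ℕ), ℕ → (Vpow k H (n + 1) →ₗ[k] Vpow k H (n + 2))
  | n, 0 => lTensor H (insV k H n)
  | 0, _ + 1 => lTensor H (insV k H 0)
  | n + 1, j + 1 => lTensor H (degV n j)

/-- counit on the last tensor factor -/
def dLast : ∀ n, Vpow k H (n + 1) →ₗ[k] Vpow k H n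
  | 0 => ct k H ∘ₗ (TensorProduct.rid k H).toLinearMap
  | n + 1 => lTensor H (dLast n)

abbrev comul2 : H →ₗ[k] H ⊗[k] (H ⊗[k] H) := lTensor H (cm k H) ∘ₗ cm k H

/-- `G(h₁ ⊗ ⋯ ⊗ hₙ) = (∏ hᵢ⁽⁰⁾) ⊗ (∏ hᵢ⁽¹⁾) ⊗ (h₁⁽²⁾ ⊗ ⋯ ⊗ hₙ⁽²⁾)` -/
def Gmap : ∀ n, Vpow k H n →ₗ[k] H ⊗[k] (H ⊗[k] Vpow k H n)
  | 0 =>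
    TensorProduct.map (un k H) (TensorProduct.map (un k H) LinearMap.id) ∘ₗ
      lTensor k (TensorProduct.lid k k).symm.toLinearMap ∘ₗ
      (TensorProduct.lid k k).symm.toLinearMap
  | n + 1 =>
    TensorProduct.map (mu k H) (TensorProduct.map (mu k H) LinearMap.id) ∘ₗ
      lTensor (H ⊗[k] H)
        (tensorTensorTensorComm k H H H (Vpow k H n)).toLinearMap ∘ₗ
      (tensorTensorTensorComm k H (H ⊗[k] H) H (H ⊗[k] Vpow k H n)).toLinearMap ∘ₗ
      TensorProduct.map (comul2 k H) (Gmap n)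

/-- `U(h₁ ⊗ ⋯ ⊗ hₙ) = (∏ hᵢ⁽⁰⁾) ⊗ (h₁⁽¹⁾ ⊗ ⋯ ⊗ hₙ⁽¹⁾)` -/
def Umap : ∀ n, Vpow k H n →ₗ[k] H ⊗[k] Vpow k H n
  | 0 => (rTensor k (un k H) : k ⊗[k] k →ₗ[k] H ⊗[k] k) ∘ₗ (TensorProduct.lid k k).symm.toLinearMap
  | n + 1 =>
    TensorProduct.map (mu k H) LinearMap.id ∘ₗ
      (tensorTensorTensorComm k H H H (Vpow k H n)).toLinearMap ∘ₗ
      rTensor (H ⊗[k] Vpow k H n) (cm k H) ∘ₗ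
      lTensor H (Umap n)

/-- the map `τ(h₁ ⊗ ⋯ ⊗ hₙ) = S(h₁⁽⁰⁾⋯hₙ⁽⁰⁾) ⊗ h₁⁽¹⁾ ⊗ ⋯ ⊗ hₙ⁽¹⁾` -/
def tauMap (n : ℕ) : Vpow k H n →ₗ[k] Vpow k H (n + 1) :=
  rTensor (Vpow k H n) (ap k H) ∘ₗ Umap k H n

/-- the pure tensor `x 0 ⊗ x 1 ⊗ ⋯` -/
def elemV : ∀ n, (Fin n → H) → Vpow k H n
  | 0, _ => (1 : k)
  | n + 1, x => x 0 ⊗ₜ[k] elemV n fun i => x i.succ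

/-- cocommutativity of the comultiplication -/
def IsCocomm : Prop :=
  (TensorProduct.comm k H H).toLinearMap ∘ₗ cm k H = cm k H

lemma diagAct_zero_tmul (a : H) (c : Vpow k H 0) :
    diagAct k H 0 (a ⊗ₜ[k] c) = ct k H a • c := by
  show (ct k H) ((TensorProduct.rid k H) (a ⊗ₜ[k] c)) = ct k H a • c
  erw [TensorProduct.rid_tmul, map_smul]
  exact mul_comm _ _

lemma diagAct_succ_sum {ι : Type} (n : ℕ) (S : Finset ι) (f g : ι → H) (a h : H)
    (y : Vpow k H n) (ha : cm k H a = ∑ i ∈ S, f i ⊗ₜ[k] g i) :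
    diagAct k H (n+1) (a ⊗ₜ[k] (h ⊗ₜ[k] y)) =
      ∑ i ∈ S, (f i * h) ⊗ₜ[k] diagAct k H n (g i ⊗ₜ[k] y) := by
  show (TensorProduct.map (mu k H) (diagAct k H n) ∘ₗ
      (tensorTensorTensorComm k H H H (Vpow k H n)).toLinearMap)
      ((rTensor (H ⊗[k] Vpow k H n) (cm k H)) (a ⊗ₜ[k] (h ⊗ₜ[k] y))) = _
  rw [rTensor_tmul, ha, sum_tmul, map_sum]
  exact Finset.sum_congr rfl fun i _ => by
    rw [comp_apply, LinearEquiv.coe_coe, tensorTensorTensorComm_tmul, map_tmul, mul'_apply]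

lemma alphaMap_succ_sum {ι : Type} (n : ℕ) (S : Finset ι) (f g : ι → H) (h : H)
    (y : Vpow k H n) (hh : cm k H h = ∑ i ∈ S, f i ⊗ₜ[k] g i) :
    alphaMap k H (n+1) (h ⊗ₜ[k] y) =
      ∑ i ∈ S, f i ⊗ₜ[k] diagAct k H n (g i ⊗ₜ[k] alphaMap k H n y) := by
  show (lTensor H (diagAct k H n))
      ((TensorProduct.assoc k H H (Vpow k H n))
        ((TensorProduct.map (cm k H) (alphaMap k H n)) (h ⊗ₜ[k] y))) = _
  rw [map_tmul, hh, sum_tmul, map_sum, map_sum]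
  exact Finset.sum_congr rfl fun i _ => by rw [assoc_tmul, lTensor_tmul]

lemma comul_mul_sum {ι κ : Type} (S : Finset ι) (T : Finset κ) (f g : ι → H)
    (f' g' : κ → H) (a b : H) (hS : cm k H a = ∑ i ∈ S, f i ⊗ₜ[k] g i)
    (hT : cm k H b = ∑ j ∈ T, f' j ⊗ₜ[k] g' j) :
    cm k H (a * b) = ∑ p ∈ S ×ˢ T, (f p.1 * f' p.2) ⊗ₜ[k] (g p.1 * g' p.2) := by
  rw [show cm k H (a*b) = Coalgebra.comul (a*b) from rfl, Bialgebra.comul_mul,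
    show Coalgebra.comul (R := k) a = cm k H a from rfl, hS,
    show Coalgebra.comul (R := k) b = cm k H b from rfl, hT,
    Finset.sum_mul_sum, Finset.sum_product]
  simp [Algebra.TensorProduct.tmul_mul_tmul]

lemma diagAct_mul (n : ℕ) (a b : H) (z : Vpow k H n) :
    diagAct k H n (a ⊗ₜ[k] diagAct k H n (b ⊗ₜ[k] z)) =
      diagAct k H n ((a * b) ⊗ₜ[k] z) := by
  induction n generalizing a b with
  | zero =>
    rw [diagAct_zero_tmul, diagAct_zero_tmul, diagAct_zero_tmul, smul_smul,
      show ct k H (a*b) = Coalgebra.counit (a*b) from rfl, Bialgebra.counit_mul, mul_comm]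
  | succ n ih =>
    induction z using TensorProduct.induction_on with
    | zero => erw [tmul_zero, map_zero]
    | tmul h y =>
      obtain ⟨S, hS⟩ := TensorProduct.exists_finset (cm k H a)
      obtain ⟨T, hT⟩ := TensorProduct.exists_finset (cm k H b)
      erw [diagAct_succ_sum k H n T Prod.fst Prod.snd b h y hT, tmul_sum, map_sum,
        diagAct_succ_sum k H n (S ×ˢ T) (fun p => p.1.1 * p.2.1) (fun p => p.1.2 * p.2.2)
          (a*b) h y (comul_mul_sum k H S T _ _ _ _ a b hS hT),
        Finset.sum_product, Finset.sum_comm]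
      refine Finset.sum_congr rfl fun j _ => ?_
      rw [diagAct_succ_sum k H n S Prod.fst Prod.snd a (j.1 * h) _ hS]
      exact Finset.sum_congr rfl fun i _ => by rw [ih, mul_assoc]
    | add u v hu hv => erw [tmul_add, map_add, tmul_add, map_add, tmul_add, map_add, hu, hv]

theorem alphaMap_equivariant (hcc : IsCocomm k H)
    (n : ℕ) (a : H) (x : Vpow k H (n + 1)) :
    alphaMap k H (n + 1) (actF k H (n + 1) (a ⊗ₜ[k] x)) =
      diagAct k H (n + 1) (a ⊗ₜ[k] alphaMap k H (n + 1) x) := by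
  induction x using TensorProduct.induction_on with
  | zero => erw [tmul_zero, map_zero]
  | tmul h y =>
    have hact : actF k H (n+1) (a ⊗ₜ[k] (h ⊗ₜ[k] y)) = (a * h) ⊗ₜ[k] y := by
      show (TensorProduct.map (mu k H) LinearMap.id)
        ((TensorProduct.assoc k H H (Vpow k H n)).symm (a ⊗ₜ[k] (h ⊗ₜ[k] y))) = _
      rw [assoc_symm_tmul, map_tmul, mul'_apply, id_coe, id_eq]
    obtain ⟨S, hS⟩ := TensorProduct.exists_finset (cm k H a)
    obtain ⟨T, hT⟩ := TensorProduct.exists_finset (cm k H h)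
    rw [hact,
      alphaMap_succ_sum k H n (S ×ˢ T) (fun p => p.1.1 * p.2.1) (fun p => p.1.2 * p.2.2)
        (a*h) y (comul_mul_sum k H S T _ _ _ _ a h hS hT),
      alphaMap_succ_sum k H n T Prod.fst Prod.snd h y hT]
    erw [tmul_sum, map_sum]
    rw [
      Finset.sum_product, Finset.sum_comm]
    refine Finset.sum_congr rfl fun j _ => ?_
    rw [diagAct_succ_sum k H n S Prod.fst Prod.snd a _ _ hS]
    exact Finset.sum_congr rfl fun i _ => by rw [diagAct_mul]
  | add u v hu hv => erw [tmul_add, map_add, map_add, map_add, tmul_add, map_add, hu, hv]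
end
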